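/- Every integer valued symmetric submodular function f : 2^V → ℕ on a finite set V with linear width k has a linked linear layout of width k. -/
import Mathlib


/-- The width of a linear layout `π` of `f`: the maximum over `1 ≤ i ≤ n−1` of
`f` applied to the set of the first `i` elements. -/
def layoutWidthF {V : Type} [Fintype V] (f : Set V → ℕ)
    (π : V ≃ Fin (Fintype.card V)) : ℕ :=
  (Finset.Ico 1 (Fintype.card V)).sup fun i => f {v | (π v : ℕ) < i}

/-- The linear width of `f`: the minimum width over all linear layouts. -/
noncomputable def linWidthF {V : Type} [Fintype V] (f : Set V → ℕ) : ℕ :=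
  ⨅ π : V ≃ Fin (Fintype.card V), layoutWidthF f π

/-- The layout `π` of `f` is linked: for all `1 ≤ i < j ≤ n−1`,
`min_{i ≤ ℓ ≤ j} f(π⁻¹{1,…,ℓ}) = min { f Z | π⁻¹{1,…,i} ⊆ Z ⊆ π⁻¹{1,…,j} }`
(note `V ∖ π⁻¹{j+1,…,n} = π⁻¹{1,…,j}`). -/
def IsLinkedLayoutF {V : Type} [Fintype V] (f : Set V → ℕ)
    (π : V ≃ Fin (Fintype.card V)) : Prop :=
  ∀ i j : ℕ, 1 ≤ i → i < j → j ≤ Fintype.card V - 1 →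
    sInf ((fun ℓ => f {v | (π v : ℕ) < ℓ}) '' Set.Icc i j) =
    sInf (f '' {Z : Set V | {v | (π v : ℕ) < i} ⊆ Z ∧ Z ⊆ {v | (π v : ℕ) < j}})

/-- Auxiliary potential: the total cost of a layout. -/
noncomputable def layoutCost {V : Type} [Fintype V] (f : Set V → ℕ)
    (π : V ≃ Fin (Fintype.card V)) : ℕ :=
  ∑ v : V, f {w | (π w : ℕ) < (π v : ℕ)}

/-- The exchange step: if a "corridor" between prefix `i` and prefix `j` contains a set `Z`
whose value is strictly smaller than all prefix values in between, then the layout can be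
improved: no larger width, strictly smaller cost. -/
lemma exchange_step {V : Type} [Fintype V] (f : Set V → ℕ)
    (hsub : ∀ X Y : Set V, f (X ∪ Y) + f (X ∩ Y) ≤ f X + f Y)
    (π : V ≃ Fin (Fintype.card V)) (i j : ℕ) (hi : 1 ≤ i) (hij : i ≤ j)
    (Z : Set V) (hZi : {v | (π v : ℕ) < i} ⊆ Z) (hZj : Z ⊆ {v | (π v : ℕ) < j})
    (hZmin : ∀ W : Set V, {v | (π v : ℕ) < i} ⊆ W → W ⊆ {v | (π v : ℕ) < j} → f Z ≤ f W)
    (hZlt : ∀ ℓ, i ≤ ℓ → ℓ ≤ j → f Z < f {v | (π v : ℕ) < ℓ}) :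
    ∃ π' : V ≃ Fin (Fintype.card V),
      layoutWidthF f π' ≤ layoutWidthF f π ∧ layoutCost f π' < layoutCost f π := by
  classical
  set key : V → ℕ := fun v => if v ∈ Z then (π v : ℕ) else Fintype.card V + (π v : ℕ) with hkey
  -- description of "strict lower sets" of the key
  have hsetZ : ∀ v ∈ Z, {w | key w < key v} = Z ∩ {w | (π w : ℕ) < (π v : ℕ)} := by
    intro v hv
    ext w
    simp only [Set.mem_setOf_eq, Set.mem_inter_iff, hkey]
    rw [if_pos hv]
    by_cases hw : w ∈ Z
    · rw [if_pos hw]; simp [hw]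
    · rw [if_neg hw]
      have h1 := (π v).isLt
      simp only [hw, false_and, iff_false]
      omega
  have hsetN : ∀ v ∉ Z, {w | key w < key v} = Z ∪ {w | (π w : ℕ) < (π v : ℕ)} := by
    intro v hv
    ext w
    simp only [Set.mem_setOf_eq, Set.mem_union, hkey]
    rw [if_neg hv]
    by_cases hw : w ∈ Z
    · rw [if_pos hw]
      have h1 := (π w).isLt
      simp only [hw, true_or, iff_true]
      omega
    · rw [if_neg hw]
      simp only [hw, false_or]
      omega
  have hkeyinj : Function.Injective key := by
    intro v w h
    have h1 := (π v).isLt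
    have h2 := (π w).isLt
    simp only [hkey] at h
    by_cases hv : v ∈ Z <;> by_cases hw : w ∈ Z
    · rw [if_pos hv, if_pos hw] at h; exact π.injective (Fin.val_injective h)
    · rw [if_pos hv, if_neg hw] at h; omega
    · rw [if_neg hv, if_pos hw] at h; omega
    · rw [if_neg hv, if_neg hw] at h
      exact π.injective (Fin.val_injective (by omega))
  set rnat : V → ℕ := fun v => (Finset.univ.filter fun w => key w < key v).card with hrnat
  have hr_lt_n : ∀ v, rnat v < Fintype.card V := by
    intro v
    have hvnot : v ∉ Finset.univ.filter (fun w => key w < key v) := by simp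
    have hss : Finset.univ.filter (fun w => key w < key v) ⊂ Finset.univ := by
      refine Finset.ssubset_iff_subset_ne.mpr ⟨Finset.subset_univ _, ?_⟩
      intro h
      rw [h] at hvnot
      exact hvnot (Finset.mem_univ v)
    calc rnat v < Finset.univ.card := Finset.card_lt_card hss
      _ = Fintype.card V := Finset.card_univ
  have hmono : ∀ v w, key w < key v ↔ rnat w < rnat v := by
    intro v w
    constructor
    · intro h
      apply Finset.card_lt_card
      refine Finset.ssubset_iff_subset_ne.mpr ⟨?_, ?_⟩
      · intro u hu
        simp only [Finset.mem_filter, Finset.mem_univ, true_and] at hu ⊢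
        omega
      · intro heq
        have hwv : w ∈ Finset.univ.filter (fun u => key u < key v) := by simp [h]
        rw [← heq] at hwv
        simp at hwv
    · intro h
      by_contra hk
      push_neg at hk
      have hsub2 : Finset.univ.filter (fun u => key u < key v) ⊆
          Finset.univ.filter (fun u => key u < key w) := by
        intro u hu
        simp only [Finset.mem_filter, Finset.mem_univ, true_and] at hu ⊢
        omega
      have hle : rnat v ≤ rnat w := Finset.card_le_card hsub2
      omega
  set F : V → Fin (Fintype.card V) := fun v => ⟨rnat v, hr_lt_n v⟩ with hF
  have hFinj : Function.Injective F := by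
    intro v w h
    have hr : rnat v = rnat w := congrArg Fin.val h
    have h1 : ¬ key v < key w := by rw [hmono]; omega
    have h2 : ¬ key w < key v := by rw [hmono]; omega
    exact hkeyinj (by omega)
  have hbij : Function.Bijective F :=
    (Fintype.bijective_iff_injective_and_card F).mpr ⟨hFinj, by simp⟩
  set π' : V ≃ Fin (Fintype.card V) := Equiv.ofBijective F hbij with hπ'
  have hπ'v : ∀ v, (π' v : ℕ) = rnat v := fun v => rfl
  have hset' : ∀ v, {w | (π' w : ℕ) < (π' v : ℕ)} = {w | key w < key v} := by
    intro v
    ext w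
    simp only [Set.mem_setOf_eq, hπ'v]
    exact (hmono v w).symm
  -- termwise comparison
  have hterm : ∀ v, f {w | key w < key v} ≤ f {w | (π w : ℕ) < (π v : ℕ)} := by
    intro v
    by_cases hv : v ∈ Z
    · rw [hsetZ v hv]
      by_cases hvi : (π v : ℕ) ≤ i
      · have heq : Z ∩ {w | (π w : ℕ) < (π v : ℕ)} = {w | (π w : ℕ) < (π v : ℕ)} := by
          apply Set.inter_eq_self_of_subset_right
          intro w hw
          exact hZi (by simp only [Set.mem_setOf_eq] at hw ⊢; omega)
        rw [heq]
      · have hvj : (π v : ℕ) < j := hZj hv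
        have h1 : f Z ≤ f (Z ∪ {w | (π w : ℕ) < (π v : ℕ)}) := by
          apply hZmin
          · exact hZi.trans Set.subset_union_left
          · apply Set.union_subset hZj
            intro w hw
            simp only [Set.mem_setOf_eq] at hw ⊢
            omega
        have h2 := hsub Z {w | (π w : ℕ) < (π v : ℕ)}
        omega
    · rw [hsetN v hv]
      by_cases hvj : j ≤ (π v : ℕ)
      · have heq : Z ∪ {w | (π w : ℕ) < (π v : ℕ)} = {w | (π w : ℕ) < (π v : ℕ)} := by
          apply Set.union_eq_self_of_subset_left
          intro w hw
          have := hZj hw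
          simp only [Set.mem_setOf_eq] at this ⊢
          omega
        rw [heq]
      · have hvi : i ≤ (π v : ℕ) := by
          by_contra h
          exact hv (hZi (by simp only [Set.mem_setOf_eq]; omega))
        have h1 : f Z ≤ f (Z ∩ {w | (π w : ℕ) < (π v : ℕ)}) := by
          apply hZmin
          · apply Set.subset_inter hZi
            intro w hw
            simp only [Set.mem_setOf_eq] at hw ⊢
            omega
          · exact Set.inter_subset_left.trans hZj
        have h2 := hsub Z {w | (π w : ℕ) < (π v : ℕ)}
        omega
  refine ⟨π', ?_, ?_⟩
  · -- width
    unfold layoutWidthF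
    apply Finset.sup_le
    intro ℓ hℓ
    rw [Finset.mem_Ico] at hℓ
    set v := π'.symm ⟨ℓ, hℓ.2⟩ with hv
    have hπ'vℓ : (π' v : ℕ) = ℓ := by rw [hv, Equiv.apply_symm_apply]
    have h1 : {w : V | (π' w : ℕ) < ℓ} = {w | key w < key v} := by
      rw [← hπ'vℓ]; exact hset' v
    have hπv1 : 1 ≤ (π v : ℕ) := by
      by_contra h
      push_neg at h
      have hπv0 : (π v : ℕ) = 0 := by omega
      have hvZ : v ∈ Z := hZi (by simp only [Set.mem_setOf_eq]; omega)
      have hempt : Finset.univ.filter (fun w => key w < key v) = ∅ := by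
        rw [Finset.filter_eq_empty_iff]
        intro w _
        intro hk
        have hmem : w ∈ Z ∩ {u | (π u : ℕ) < (π v : ℕ)} := (hsetZ v hvZ) ▸ hk
        have := hmem.2
        simp only [Set.mem_setOf_eq] at this
        omega
      have hr0 : rnat v = 0 := by rw [hrnat]; simp only [hempt, Finset.card_empty]
      rw [hπ'v] at hπ'vℓ
      omega
    calc f {w : V | (π' w : ℕ) < ℓ} ≤ f {w | (π w : ℕ) < (π v : ℕ)} := by
          rw [h1]; exact hterm v
      _ ≤ _ := Finset.le_sup (f := fun m => f {u : V | (π u : ℕ) < m})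
          (Finset.mem_Ico.mpr ⟨hπv1, (π v).isLt⟩)
  · -- cost
    unfold layoutCost
    apply Finset.sum_lt_sum
    · intro v _
      rw [hset' v]
      exact hterm v
    · -- strict at v₀
      have hex : ∃ v, v ∉ Z ∧ (π v : ℕ) < j := by
        by_contra h
        push_neg at h
        have hZeq : Z = {v | (π v : ℕ) < j} := by
          apply Set.Subset.antisymm hZj
          intro v hv
          by_contra hvZ
          exact absurd hv (by simp only [Set.mem_setOf_eq, not_lt]; exact h v hvZ)
        have := hZlt j hij le_rfl
        rw [← hZeq] at this
        omega
      obtain ⟨v₀, hv₀mem, hv₀min⟩ := Finset.exists_min_image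
        (Finset.univ.filter fun v => v ∉ Z ∧ (π v : ℕ) < j) (fun v => (π v : ℕ))
        (by obtain ⟨v, hv⟩ := hex; exact ⟨v, by simp [hv.1, hv.2]⟩)
      simp only [Finset.mem_filter, Finset.mem_univ, true_and] at hv₀mem
      have hP₀ : {w | (π w : ℕ) < (π v₀ : ℕ)} ⊆ Z := by
        intro w hw
        by_contra hwZ
        simp only [Set.mem_setOf_eq] at hw
        have hle : (π v₀ : ℕ) ≤ (π w : ℕ) := by
          apply hv₀min
          simp only [Finset.mem_filter, Finset.mem_univ, true_and]
          exact ⟨hwZ, by omega⟩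
        omega
      have hkeyset : {w | key w < key v₀} = Z := by
        rw [hsetN v₀ hv₀mem.1]
        exact Set.union_eq_self_of_subset_right hP₀
      refine ⟨v₀, Finset.mem_univ _, ?_⟩
      rw [hset' v₀, hkeyset]
      apply hZlt
      · by_contra h
        exact hv₀mem.1 (hZi (by simp only [Set.mem_setOf_eq]; omega))
      · omega

theorem exists_linked_layout {V : Type} [Fintype V] (f : Set V → ℕ)
    (hsym : ∀ X : Set V, f X = f Xᶜ)
    (hsub : ∀ X Y : Set V, f (X ∪ Y) + f (X ∩ Y) ≤ f X + f Y) :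
    ∃ π : V ≃ Fin (Fintype.card V),
      IsLinkedLayoutF f π ∧ layoutWidthF f π = linWidthF f := by
  classical
  set k := linWidthF f with hk
  have hlow : ∀ π : V ≃ Fin (Fintype.card V), k ≤ layoutWidthF f π := by
    intro π
    rw [hk, linWidthF, iInf]
    exact Nat.sInf_le (Set.mem_range_self π)
  -- the set of costs of minimum-width layouts
  have hAne : (layoutCost f '' {π : V ≃ Fin (Fintype.card V) | layoutWidthF f π = k}).Nonempty := by
    have : Nonempty (V ≃ Fin (Fintype.card V)) := ⟨Fintype.equivFin V⟩
    have hrne : (Set.range fun π : V ≃ Fin (Fintype.card V) => layoutWidthF f π).Nonempty :=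
      Set.range_nonempty _
    have := Nat.sInf_mem hrne
    obtain ⟨π₀, hπ₀⟩ := this
    exact ⟨layoutCost f π₀, π₀, by rw [hk, linWidthF, iInf]; exact hπ₀, rfl⟩
  obtain ⟨π, hπw, hπc⟩ := Nat.sInf_mem hAne
  refine ⟨π, ?_, hπw⟩
  intro i j hi hij hj
  by_contra hne
  -- the two sets of values
  set L := ((fun ℓ => f {v | (π v : ℕ) < ℓ}) '' Set.Icc i j) with hL
  set R := (f '' {Z : Set V | {v | (π v : ℕ) < i} ⊆ Z ∧ Z ⊆ {v | (π v : ℕ) < j}}) with hR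
  have hLne : L.Nonempty := ⟨f {v | (π v : ℕ) < i}, i, Set.mem_Icc.mpr ⟨le_rfl, le_of_lt hij⟩, rfl⟩
  have hRleL : sInf R ≤ sInf L := by
    obtain ⟨ℓ, hℓmem, hℓval⟩ := Nat.sInf_mem hLne
    rw [Set.mem_Icc] at hℓmem
    rw [← hℓval]
    apply Nat.sInf_le
    exact ⟨{v | (π v : ℕ) < ℓ},
      ⟨fun v hv => by simp only [Set.mem_setOf_eq] at hv ⊢; omega,
       fun v hv => by simp only [Set.mem_setOf_eq] at hv ⊢; omega⟩, rfl⟩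
  have hRlt : sInf R < sInf L := lt_of_le_of_ne hRleL (fun h => hne h.symm)
  have hRne : R.Nonempty := ⟨f {v | (π v : ℕ) < i},
    ⟨{v | (π v : ℕ) < i}, ⟨le_rfl,
      fun v hv => by simp only [Set.mem_setOf_eq] at hv ⊢; omega⟩, rfl⟩⟩
  obtain ⟨Z, hZcorr, hZval⟩ := Nat.sInf_mem hRne
  have hZmin : ∀ W : Set V, {v | (π v : ℕ) < i} ⊆ W → W ⊆ {v | (π v : ℕ) < j} → f Z ≤ f W := by
    intro W h1 h2
    rw [hZval]
    exact Nat.sInf_le ⟨W, ⟨h1, h2⟩, rfl⟩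
  have hZlt : ∀ ℓ, i ≤ ℓ → ℓ ≤ j → f Z < f {v | (π v : ℕ) < ℓ} := by
    intro ℓ h1 h2
    have hLle : sInf L ≤ f {v | (π v : ℕ) < ℓ} :=
      Nat.sInf_le ⟨ℓ, Set.mem_Icc.mpr ⟨h1, h2⟩, rfl⟩
    omega
  obtain ⟨π', hw', hc'⟩ := exchange_step f hsub π i j hi (le_of_lt hij) Z hZcorr.1 hZcorr.2
    hZmin hZlt
  have hw'eq : layoutWidthF f π' = k := le_antisymm (hπw ▸ hw') (hlow π')
  have : sInf (layoutCost f '' {π : V ≃ Fin (Fintype.card V) | layoutWidthF f π = k})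
      ≤ layoutCost f π' := Nat.sInf_le ⟨π', hw'eq, rfl⟩
  omega
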